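/- Let W be an even positive integer, ξ ∈ [W], and a, q coprime positive integers. If gcd(ξ, W) = 1, then |(1/q) Σ_{r=1}^{q} e((a((W/2)r² + ξr))/q)| is 0 when gcd(q, W/2) > 1, and is O(q^{−1/2}) when gcd(q, W/2) = 1. -/

import Mathlib

open Finset Complex
noncomputable def eN (N : ℕ) (n : ℤ) : ℂ :=
  Complex.exp (2 * Real.pi * Complex.I * ((n : ℂ) / (N : ℂ)))
lemma eN_add (N : ℕ) (m n : ℤ) : eN N (m + n) = eN N m * eN N n := by
  rw [eN, eN, eN, ← Complex.exp_add]; congr 1; push_cast; ring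
lemma eN_dvd (N : ℕ) (hN : 0 < N) (n : ℤ) (h : (N : ℤ) ∣ n) : eN N n = 1 := by
  obtain ⟨k, rfl⟩ := h
  rw [eN]
  have hN' : (N : ℂ) ≠ 0 := by exact_mod_cast hN.ne'
  have h2 : ((((N : ℤ) * k : ℤ) : ℂ) / (N : ℂ)) = (k : ℂ) := by
    push_cast; field_simp
  rw [h2, ← Complex.exp_int_mul_two_pi_mul_I k]
  congr 1; ring

lemma eN_eq_one_iff (N : ℕ) (hN : 0 < N) (n : ℤ) : eN N n = 1 ↔ (N : ℤ) ∣ n := by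
  constructor
  · intro h
    rw [eN, Complex.exp_eq_one_iff] at h
    obtain ⟨k, hk⟩ := h
    refine ⟨k, ?_⟩
    have hN' : (N : ℂ) ≠ 0 := by exact_mod_cast hN.ne'
    have h2 : (2 * Real.pi * Complex.I : ℂ) ≠ 0 := by
      simp [Real.pi_ne_zero, Complex.I_ne_zero]
    have : (n : ℂ) = (N : ℂ) * (k : ℂ) := by
      field_simp at hk
      have h3 : 2 * (Real.pi : ℂ) * Complex.I * (n : ℂ)
          = 2 * (Real.pi : ℂ) * Complex.I * ((N : ℂ) * (k : ℂ)) := by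
        rw [hk]
      exact mul_left_cancel₀ h2 h3
    exact_mod_cast this
  · exact eN_dvd N hN n

lemma eN_pow (N : ℕ) (c : ℤ) (r : ℕ) : eN N c ^ r = eN N (c * r) := by
  induction r with
  | zero => simp [eN]
  | succ r ih =>
      have : c * ((r : ℤ) + 1) = c * r + c := by ring
      rw [pow_succ, ih]
      push_cast
      rw [this, eN_add]

lemma eN_sum_mul (N : ℕ) (hN : 0 < N) (c : ℤ) :
    ∑ r ∈ Finset.range N, eN N (c * r) = if (N : ℤ) ∣ c then (N : ℂ) else 0 := by
  by_cases h : (N : ℤ) ∣ c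
  · simp only [if_pos h]
    have : ∀ r ∈ Finset.range N, eN N (c * r) = 1 := by
      intro r _
      exact eN_dvd N hN _ (h.mul_right _)
    rw [Finset.sum_congr rfl this]
    simp
  · simp only [if_neg h]
    have hne : eN N c ≠ 1 := fun hc => h ((eN_eq_one_iff N hN c).mp hc)
    have : ∑ r ∈ Finset.range N, eN N (c * r) = ∑ r ∈ Finset.range N, eN N c ^ r := by
      refine Finset.sum_congr rfl fun r _ => ?_
      rw [eN_pow]
    rw [this, geom_sum_eq hne]
    have : eN N c ^ N = 1 := by
      rw [eN_pow]
      exact eN_dvd N hN _ ⟨c, mul_comm c N⟩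
    rw [this]; simp

lemma shift_one (N : ℕ) (hN : 0 < N) (g : ℤ → ℂ) (hg : ∀ x, g (x + N) = g x) :
    ∑ r ∈ Finset.range N, g (r + 1) = ∑ r ∈ Finset.range N, g r := by
  have h1 : ∑ r ∈ Finset.range (N + 1), g r = ∑ r ∈ Finset.range N, g (r + 1) + g 0 := by
    rw [Finset.sum_range_succ']
    push_cast
    simp [add_comm]
  have h2 : ∑ r ∈ Finset.range (N + 1), g r = ∑ r ∈ Finset.range N, g r + g N := by
    rw [Finset.sum_range_succ]
  have h3 : g (N : ℤ) = g 0 := by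
    have := hg 0; simpa using this
  have := h1.symm.trans h2
  rw [h3] at this
  linear_combination this

lemma period_mul (N : ℕ) (g : ℤ → ℂ) (hg : ∀ x, g (x + N) = g x) (x : ℤ) (k : ℤ) :
    g (x + N * k) = g x := by
  induction k using Int.induction_on with
  | zero => simp
  | succ k ih =>
      rw [show x + (N:ℤ) * (k + 1) = (x + N * k) + N by ring, hg, ih]
  | pred k ih =>
      have := hg (x + (N:ℤ) * (-(k:ℤ) - 1))
      rw [show x + (N:ℤ) * (-(k:ℤ) - 1) + N = x + N * (-(k:ℤ)) by ring] at this
      rw [← this, ih]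

lemma shift_nat (N : ℕ) (hN : 0 < N) (g : ℤ → ℂ) (hg : ∀ x, g (x + N) = g x) (t : ℕ) :
    ∑ r ∈ Finset.range N, g (r + t) = ∑ r ∈ Finset.range N, g r := by
  induction t with
  | zero => simp
  | succ t ih =>
      have : ∀ r : ℕ, ((r : ℤ) + (t + 1 : ℕ)) = ((r : ℤ) + t) + 1 := by
        intro r; push_cast; ring
      have hper : ∀ x : ℤ, g (x + N + t) = g (x + t) := by
        intro x
        rw [show x + (N:ℤ) + t = (x + t) + N by ring, hg]
      have h1 : ∑ r ∈ Finset.range N, (fun x => g (x + t)) ((r : ℤ) + 1)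
          = ∑ r ∈ Finset.range N, (fun x => g (x + t)) (r : ℤ) :=
        shift_one N hN (fun x => g (x + t)) fun x => hper x
      calc ∑ r ∈ Finset.range N, g (r + (t + 1 : ℕ))
          = ∑ r ∈ Finset.range N, (fun x => g (x + t)) ((r : ℤ) + 1) := by
            refine Finset.sum_congr rfl fun r _ => ?_
            show g (↑r + ↑(t + 1)) = g ((r : ℤ) + 1 + t)
            rw [this r]; congr 1; ring
        _ = ∑ r ∈ Finset.range N, g ((r : ℤ) + t) := h1
        _ = ∑ r ∈ Finset.range N, g r := ih

lemma shift_gen (N : ℕ) (hN : 0 < N) (g : ℤ → ℂ) (hg : ∀ x, g (x + N) = g x) (t : ℤ) :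
    ∑ r ∈ Finset.range N, g (r + t) = ∑ r ∈ Finset.range N, g r := by
  have hsplit : ∀ r : ℕ, g (r + t) = g (r + (t % (N : ℤ))) := by
    intro r
    have hd : (r : ℤ) + t = (r + t % (N : ℤ)) + (N : ℤ) * (t / (N : ℤ)) := by
      have := Int.mul_ediv_add_emod t (N : ℤ)
      linarith
    rw [hd, period_mul N g hg]
  have hnn : 0 ≤ t % (N : ℤ) := Int.emod_nonneg t (by exact_mod_cast hN.ne')
  obtain ⟨s, hs⟩ : ∃ s : ℕ, t % (N : ℤ) = (s : ℤ) := ⟨(t % (N:ℤ)).toNat, (Int.toNat_of_nonneg hnn).symm⟩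
  calc ∑ r ∈ Finset.range N, g (r + t) = ∑ r ∈ Finset.range N, g (r + (s : ℤ)) := by
        refine Finset.sum_congr rfl fun r _ => ?_
        rw [hsplit r, hs]
    _ = ∑ r ∈ Finset.range N, g r := shift_nat N hN g hg s

lemma eN_norm (N : ℕ) (n : ℤ) : ‖eN N n‖ = 1 := by
  have h : (2 * Real.pi * Complex.I * ((n : ℂ) / (N : ℂ)))
      = ((2 * Real.pi * ((n : ℝ) / (N : ℝ)) : ℝ) : ℂ) * Complex.I := by
    push_cast; ring
  rw [eN, h, Complex.norm_exp_ofReal_mul_I]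

lemma eN_congr (N : ℕ) (hN : 0 < N) (m n : ℤ) (h : (N : ℤ) ∣ m - n) : eN N m = eN N n := by
  have : eN N m = eN N n * eN N (m - n) := by
    rw [← eN_add]; congr 1; ring
  rw [this, eN_dvd N hN _ h, mul_one]

lemma eN_conj (N : ℕ) (n : ℤ) : (starRingEnd ℂ) (eN N n) = eN N (-n) := by
  rw [eN, eN, ← Complex.exp_conj]
  congr 1
  simp only [map_mul, map_div₀, Complex.conj_I, map_ofNat, Complex.conj_ofReal,
    map_intCast, map_natCast]
  push_cast
  ring

lemma icc_to_range (q : ℤ) (hq : 0 < q) (F : ℤ → ℂ) :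
    ∑ r ∈ Finset.Icc 1 q, F r = ∑ r ∈ Finset.range q.toNat, F ((r : ℤ) + 1) := by
  have : Finset.Icc (1:ℤ) q
      = Finset.map ⟨fun n : ℕ => (n:ℤ)+1, fun a b h => by dsimp at h; omega⟩ (Finset.range q.toNat) := by
    ext x
    simp only [Finset.mem_Icc, Finset.mem_map, Finset.mem_range, Function.Embedding.coeFn_mk]
    constructor
    · rintro ⟨h1, h2⟩
      exact ⟨(x - 1).toNat, by omega, by show ((x - 1).toNat : ℤ) + 1 = x; omega⟩
    · rintro ⟨a, ha, rfl⟩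
      show (1:ℤ) ≤ (a:ℤ) + 1 ∧ (a:ℤ) + 1 ≤ q
      omega
  rw [this, Finset.sum_map]
  rfl

lemma f_per (N : ℕ) (hN : 0 < N) (a M ξ : ℤ) (x : ℤ) :
    eN N (a*(M*(x+N)^2 + ξ*(x+N))) = eN N (a*(M*x^2 + ξ*x)) :=
  eN_congr N hN _ _ ⟨a*(M*(2*x+N)+ξ), by ring⟩

lemma part1 (N : ℕ) (hN : 0 < N) (a M ξ d t : ℤ)
    (hq : (N:ℤ) = d * t) (hdM : d ∣ M) (hco : IsCoprime d (a * ξ)) (hd : 1 < d) :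
    ∑ r ∈ Finset.range N, eN N (a*(M*(r:ℤ)^2 + ξ*r)) = 0 := by
  set g : ℤ → ℂ := fun x => eN N (a*(M*x^2+ξ*x)) with hg
  have hper : ∀ x, g (x + N) = g x := fun x => f_per N hN a M ξ x
  have hshift : ∀ x : ℤ, g (x + t) = g x * eN N (a*ξ*t) := by
    intro x
    have h1 : eN N (a*(M*(x+t)^2+ξ*(x+t))) = eN N ((a*(M*x^2+ξ*x)) + a*ξ*t) := by
      apply eN_congr N hN
      rw [hq]
      obtain ⟨m, rfl⟩ := hdM
      exact ⟨a*m*(2*x+t), by ring⟩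
    show eN N (a*(M*(x+t)^2+ξ*(x+t))) = eN N (a*(M*x^2+ξ*x)) * eN N (a*ξ*t)
    rw [h1, eN_add]
  have h2 : ∑ r ∈ Finset.range N, g r = (∑ r ∈ Finset.range N, g r) * eN N (a*ξ*t) := by
    calc ∑ r ∈ Finset.range N, g r
        = ∑ r ∈ Finset.range N, g (↑r + t) := (shift_gen N hN g hper t).symm
      _ = ∑ r ∈ Finset.range N, g ↑r * eN N (a*ξ*t) := Finset.sum_congr rfl fun r _ => hshift r
      _ = (∑ r ∈ Finset.range N, g ↑r) * eN N (a*ξ*t) := by rw [Finset.sum_mul]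
  have hu : eN N (a*ξ*t) ≠ 1 := by
    intro h
    have hdvd : (N:ℤ) ∣ a*ξ*t := (eN_eq_one_iff N hN _).mp h
    rw [hq] at hdvd
    have ht : t ≠ 0 := by
      rintro rfl
      rw [mul_zero] at hq
      omega
    have hd2 : d ∣ a*ξ := by
      have : d * t ∣ (a*ξ) * t := by rwa [mul_comm a ξ] at hdvd ⊢ <;> ring_nf at hdvd ⊢ <;> exact hdvd
      exact (mul_dvd_mul_iff_right ht).mp this
    have := hco.isUnit_of_dvd' dvd_rfl hd2
    rw [Int.isUnit_iff] at this
    omega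
  have h3 : (∑ r ∈ Finset.range N, g r) * (1 - eN N (a*ξ*t)) = 0 := by
    rw [mul_sub, mul_one, ← h2, sub_self]
  rcases mul_eq_zero.mp h3 with h | h
  · exact h
  · exact absurd (by linear_combination -h : eN N (a*ξ*t) = 1) hu

lemma part2 (N : ℕ) (hN : 0 < N) (a M ξ : ℤ) (hco : IsCoprime (N:ℤ) (a*M)) :
    ‖∑ r ∈ Finset.range N, eN N (a*(M*(r:ℤ)^2 + ξ*r))‖^2 ≤ 2*N := by
  set f : ℤ → ℤ := fun x => a*(M*x^2+ξ*x) with hf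
  set S : ℂ := ∑ r ∈ Finset.range N, eN N (f r) with hS
  have expand : (starRingEnd ℂ) S * S
      = ∑ y ∈ Finset.range N, ∑ x ∈ Finset.range N, eN N (f x - f y) := by
    rw [hS, map_sum]
    rw [Finset.sum_mul_sum]
    refine Finset.sum_congr rfl fun y _ => Finset.sum_congr rfl fun x _ => ?_
    rw [eN_conj, mul_comm, ← eN_add, sub_eq_add_neg]
  have inner : ∀ y ∈ Finset.range N,
      ∑ x ∈ Finset.range N, eN N (f x - f y)
      = ∑ h ∈ Finset.range N, eN N ((2*a*M*h) * y + (a*(M*(h:ℤ)^2+ξ*h))) := by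
    intro y _
    have hper : ∀ x : ℤ, eN N (f (x + N) - f y) = eN N (f x - f y) := by
      intro x
      apply eN_congr N hN
      refine ⟨a*(M*(2*x+N)+ξ), ?_⟩
      simp only [hf]
      ring
    have := shift_gen N hN (fun x => eN N (f x - f y)) hper (y : ℤ)
    rw [← this]
    refine Finset.sum_congr rfl fun h _ => ?_
    show eN N (f (h + y) - f y) = _
    congr 1
    simp only [hf]
    ring
  have expand2 : (starRingEnd ℂ) S * S
      = ∑ h ∈ Finset.range N,
          (if (N:ℤ) ∣ 2*a*M*h then (N:ℂ) else 0) * eN N (a*(M*(h:ℤ)^2+ξ*h)) := by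
    rw [expand, Finset.sum_congr rfl inner, Finset.sum_comm]
    refine Finset.sum_congr rfl fun h _ => ?_
    have : ∀ y : ℕ, eN N ((2*a*M*h) * y + (a*(M*(h:ℤ)^2+ξ*h)))
        = eN N ((2*a*M*h) * y) * eN N (a*(M*(h:ℤ)^2+ξ*h)) := fun y => eN_add N _ _
    rw [Finset.sum_congr rfl (fun y _ => this y), ← Finset.sum_mul, eN_sum_mul N hN]
  -- count the h with N ∣ 2aMh
  have hcard : ((Finset.range N).filter (fun h : ℕ => (N:ℤ) ∣ 2*a*M*(h:ℤ))).card ≤ 2 := by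
    have hsub : (Finset.range N).filter (fun h : ℕ => (N:ℤ) ∣ 2*a*M*(h:ℤ)) ⊆ {0, N/2} := by
      intro h hmem
      simp only [Finset.mem_filter, Finset.mem_range] at hmem
      obtain ⟨hlt, hdvd⟩ := hmem
      have hdvd2 : (N:ℤ) ∣ 2*(h:ℤ) := by
        apply hco.dvd_of_dvd_mul_right
        rwa [show (2*(h:ℤ))*(a*M) = 2*a*M*(h:ℤ) by ring]
      obtain ⟨k, hk⟩ := hdvd2
      have hh0 : (0:ℤ) ≤ (h:ℤ) := Int.natCast_nonneg h
      have hhN : (h:ℤ) < (N:ℤ) := by exact_mod_cast hlt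
      have hN0 : (0:ℤ) < (N:ℤ) := by exact_mod_cast hN
      have hk0 : 0 ≤ k := by nlinarith
      have hk1 : k ≤ 1 := by nlinarith
      simp only [Finset.mem_insert, Finset.mem_singleton]
      interval_cases k
      · left; omega
      · right; omega
    calc ((Finset.range N).filter (fun h : ℕ => (N:ℤ) ∣ 2*a*M*(h:ℤ))).card
        ≤ ({0, N/2} : Finset ℕ).card := Finset.card_le_card hsub
      _ ≤ 2 := by
          apply (Finset.card_insert_le _ _).trans
          simp
  have hnorm : ‖(starRingEnd ℂ) S * S‖ ≤ 2*N := by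
    rw [expand2]
    refine (norm_sum_le _ _).trans ?_
    have hterm : ∀ h ∈ Finset.range N,
        ‖(if (N:ℤ) ∣ 2*a*M*h then (N:ℂ) else 0) * eN N (a*(M*(h:ℤ)^2+ξ*h))‖
        = (if (N:ℤ) ∣ 2*a*M*h then (N:ℝ) else 0) := by
      intro h _
      rw [norm_mul, eN_norm, mul_one, apply_ite (‖·‖)]
      simp
    rw [Finset.sum_congr rfl hterm, Finset.sum_ite, Finset.sum_const, Finset.sum_const_zero,
      add_zero, nsmul_eq_mul]
    have := hcard
    calc (((Finset.range N).filter (fun h : ℕ => (N:ℤ) ∣ 2*a*M*(h:ℤ))).card : ℝ) * (N:ℝ)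
        ≤ 2 * (N:ℝ) := by
          apply mul_le_mul_of_nonneg_right _ (by positivity)
          exact_mod_cast hcard
      _ = 2*N := rfl
  calc ‖S‖^2 = ‖(starRingEnd ℂ) S * S‖ := by
        rw [norm_mul, RCLike.norm_conj, sq]
    _ ≤ 2*N := hnorm

theorem local_weyl_estimate :
    ∃ C : ℝ, 0 < C ∧ ∀ (W ξ a q : ℤ), 0 < W → 2 ∣ W → 1 ≤ ξ → ξ ≤ W →
      Int.gcd ξ W = 1 → 0 < a → 0 < q → Int.gcd a q = 1 →
      (1 < Int.gcd q (W / 2) →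
        ‖(1 / (q : ℂ)) * ∑ r ∈ Finset.Icc 1 q,
            Complex.exp (2 * Real.pi * Complex.I *
              (((a * ((W / 2) * r ^ 2 + ξ * r) : ℤ) : ℝ) / (q : ℝ)))‖ = 0) ∧
      (Int.gcd q (W / 2) = 1 →
        ‖(1 / (q : ℂ)) * ∑ r ∈ Finset.Icc 1 q,
            Complex.exp (2 * Real.pi * Complex.I *
              (((a * ((W / 2) * r ^ 2 + ξ * r) : ℤ) : ℝ) / (q : ℝ)))‖ ≤
          C / Real.sqrt (q : ℝ)) := by
  refine ⟨Real.sqrt 2, Real.sqrt_pos.mpr (by norm_num), ?_⟩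
  intro W ξ a q hW hW2 hξ1 hξW hgcdξ ha hq hgcdaq
  obtain ⟨M, rfl⟩ := hW2
  have hdiv : (2*M)/2 = M := Int.mul_ediv_cancel_left M two_ne_zero
  set N := q.toNat with hNdef
  have hNq : (N:ℤ) = q := Int.toNat_of_nonneg hq.le
  have hN : 0 < N := by omega
  have hNqC : ((N:ℕ):ℂ) = ((q:ℝ):ℂ) := by exact_mod_cast hNq
  have hterm : ∀ r : ℤ,
      Complex.exp (2 * Real.pi * Complex.I *
        (((a * (((2*M) / 2) * r ^ 2 + ξ * r) : ℤ) : ℝ) / (q : ℝ)))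
      = eN N (a*(M*r^2 + ξ*r)) := by
    intro r
    rw [eN, hdiv]
    congr 1
    rw [← hNqC]
    push_cast
    ring
  have hper : ∀ x : ℤ, eN N (a*(M*(x+(N:ℤ))^2 + ξ*(x+(N:ℤ)))) = eN N (a*(M*x^2+ξ*x)) :=
    f_per N hN a M ξ
  have hsum : ∑ r ∈ Finset.Icc 1 q,
      Complex.exp (2 * Real.pi * Complex.I *
        (((a * (((2*M) / 2) * r ^ 2 + ξ * r) : ℤ) : ℝ) / (q : ℝ)))
      = ∑ r ∈ Finset.range N, eN N (a*(M*(r:ℤ)^2 + ξ*r)) := by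
    rw [icc_to_range q hq]
    calc ∑ r ∈ Finset.range N, Complex.exp (2 * Real.pi * Complex.I *
          (((a * (((2*M) / 2) * ((r:ℤ)+1) ^ 2 + ξ * ((r:ℤ)+1)) : ℤ) : ℝ) / (q : ℝ)))
        = ∑ r ∈ Finset.range N, (fun x => eN N (a*(M*x^2 + ξ*x))) ((r:ℤ) + 1) := by
          refine Finset.sum_congr rfl fun r _ => ?_
          exact hterm ((r:ℤ)+1)
      _ = ∑ r ∈ Finset.range N, eN N (a*(M*(r:ℤ)^2 + ξ*r)) :=
          shift_gen N hN (fun x => eN N (a*(M*x^2 + ξ*x))) (fun x => hper x) 1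
  rw [hsum, hdiv]
  constructor
  · -- vanishing case
    intro hgcd
    set D : ℤ := (Int.gcd q M : ℤ) with hD
    have hd : 1 < D := by rw [hD]; exact_mod_cast hgcd
    have hdq : D ∣ q := Int.gcd_dvd_left q M
    have hdM : D ∣ M := Int.gcd_dvd_right q M
    have hq_eq : (N:ℤ) = D * (q / D) := by
      rw [hNq, Int.mul_ediv_cancel' hdq]
    have hcoa : IsCoprime D a := by
      have h1 : IsCoprime a q := Int.isCoprime_iff_gcd_eq_one.mpr hgcdaq
      exact (IsCoprime.of_isCoprime_of_dvd_left h1.symm hdq).symm.symm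
    have hcoξ : IsCoprime D ξ := by
      have h1 : IsCoprime ξ (2*M) := Int.isCoprime_iff_gcd_eq_one.mpr hgcdξ
      have h2 : D ∣ 2*M := Dvd.dvd.mul_left hdM 2
      exact IsCoprime.of_isCoprime_of_dvd_left h1.symm h2
    have hco : IsCoprime D (a*ξ) := hcoa.mul_right hcoξ
    rw [part1 N hN a M ξ D (q/D) hq_eq hdM hco hd]
    simp
  · -- bound case
    intro hgcd
    have hcoM : IsCoprime q M := Int.isCoprime_iff_gcd_eq_one.mpr hgcd
    have hcoa : IsCoprime q a := (Int.isCoprime_iff_gcd_eq_one.mpr hgcdaq).symm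
    have hco : IsCoprime ((N:ℕ):ℤ) (a*M) := by
      rw [hNq]; exact hcoa.mul_right hcoM
    have h2 := part2 N hN a M ξ hco
    set S : ℂ := ∑ r ∈ Finset.range N, eN N (a*(M*(r:ℤ)^2 + ξ*r)) with hSdef
    have hqR : (0:ℝ) < (q:ℝ) := by exact_mod_cast hq
    have hNR : ((N:ℕ):ℝ) = (q:ℝ) := by exact_mod_cast hNq
    have hS1 : ‖S‖ ≤ Real.sqrt 2 * Real.sqrt (q:ℝ) := by
      have h3 : ‖S‖^2 ≤ 2 * (q:ℝ) := by rw [← hNR]; exact_mod_cast h2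
      have h4 : ‖S‖ = Real.sqrt (‖S‖^2) := (Real.sqrt_sq (norm_nonneg S)).symm
      rw [h4, ← Real.sqrt_mul (by norm_num : (0:ℝ) ≤ 2)]
      exact Real.sqrt_le_sqrt h3
    have hnormq : ‖(q:ℂ)‖ = (q:ℝ) := by
      rw [show ((q:ℤ):ℂ) = ((q:ℝ):ℂ) by push_cast; ring, Complex.norm_real]
      exact abs_of_pos hqR
    have hsqrtq : 0 < Real.sqrt (q:ℝ) := Real.sqrt_pos.mpr hqR
    calc ‖(1/(q:ℂ)) * S‖ = ‖S‖ / (q:ℝ) := by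
          rw [norm_mul, norm_div, norm_one, hnormq, one_div, inv_mul_eq_div]
      _ ≤ (Real.sqrt 2 * Real.sqrt (q:ℝ)) / (q:ℝ) := by
          gcongr
      _ = Real.sqrt 2 / Real.sqrt (q:ℝ) := by
          field_simp
          rw [Real.sq_sqrt hqR.le]
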